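/- arXiv:2105.13922 — 5 statements merged into one kernel-verified Lean document; each statement's English description precedes it below -/
import Mathlib

section
/- Let E : ℝ^m × ℝ^n → ℝ be three-times continuously differentiable, set f = ∇_φ E and g = −∇_θ E (zero-sum game with simultaneous gradient descent), and let (φ*, θ*) be an equilibrium (f = 0 = g there). Then the trace of the modified Jacobian satisfies Tr(J̃) = Tr(J) − (h/2)(α‖∇_{φφ}E‖_F² + λ‖∇_{θθ}E‖_F²) + (h/2)(α + λ)‖∇_{φθ}E‖_F², where J is the Jacobian of (f, g) at (φ*, θ*), ∇_{φφ}E, ∇_{θθ}E, ∇_{φθ}E are the Hessian blocks of E at (φ*, θ*), and ‖·‖_F is the Frobenius norm. -/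
noncomputable section

/-- Gradient with respect to the first player's parameters `φ`. -/
def gradPhi {m n : ℕ}
    (E : EuclideanSpace ℝ (Fin m) × EuclideanSpace ℝ (Fin n) → ℝ)
    (z : EuclideanSpace ℝ (Fin m) × EuclideanSpace ℝ (Fin n)) : EuclideanSpace ℝ (Fin m) :=
  gradient (fun φ => E (φ, z.2)) z.1

/-- Gradient with respect to the second player's parameters `θ`. -/
def gradTheta {m n : ℕ}
    (E : EuclideanSpace ℝ (Fin m) × EuclideanSpace ℝ (Fin n) → ℝ)
    (z : EuclideanSpace ℝ (Fin m) × EuclideanSpace ℝ (Fin n)) : EuclideanSpace ℝ (Fin n) :=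
  gradient (fun θ => E (z.1, θ)) z.2

/-- Partial (Fréchet) derivative with respect to the first player's parameters `φ`. -/
def dPhi {m n : ℕ} {W : Type*} [NormedAddCommGroup W] [NormedSpace ℝ W]
    (f : EuclideanSpace ℝ (Fin m) × EuclideanSpace ℝ (Fin n) → W)
    (z : EuclideanSpace ℝ (Fin m) × EuclideanSpace ℝ (Fin n)) :
    EuclideanSpace ℝ (Fin m) →L[ℝ] W :=
  (fderiv ℝ f z).comp (ContinuousLinearMap.inl ℝ (EuclideanSpace ℝ (Fin m)) (EuclideanSpace ℝ (Fin n)))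

/-- Partial (Fréchet) derivative with respect to the second player's parameters `θ`. -/
def dTheta {m n : ℕ} {W : Type*} [NormedAddCommGroup W] [NormedSpace ℝ W]
    (f : EuclideanSpace ℝ (Fin m) × EuclideanSpace ℝ (Fin n) → W)
    (z : EuclideanSpace ℝ (Fin m) × EuclideanSpace ℝ (Fin n)) :
    EuclideanSpace ℝ (Fin n) →L[ℝ] W :=
  (fderiv ℝ f z).comp (ContinuousLinearMap.inr ℝ (EuclideanSpace ℝ (Fin m)) (EuclideanSpace ℝ (Fin n)))

/-- Squared Frobenius norm of a linear map between Euclidean spaces, `‖T‖_F² = Tr(Tᵀ T)`. -/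
def frobSq {a b : ℕ} (T : EuclideanSpace ℝ (Fin a) →L[ℝ] EuclideanSpace ℝ (Fin b)) : ℝ :=
  LinearMap.trace ℝ (EuclideanSpace ℝ (Fin a))
    ((ContinuousLinearMap.adjoint T ∘L T : EuclideanSpace ℝ (Fin a) →L[ℝ] EuclideanSpace ℝ (Fin a)) :
      _ →ₗ[ℝ] _)

open ContinuousLinearMap InnerProductSpace

lemma gradPhi_eq {m n : ℕ} (E : EuclideanSpace ℝ (Fin m) × EuclideanSpace ℝ (Fin n) → ℝ)
    (hEd : Differentiable ℝ E) (z : EuclideanSpace ℝ (Fin m) × EuclideanSpace ℝ (Fin n)) :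
    gradPhi E z = (toDual ℝ (EuclideanSpace ℝ (Fin m))).symm
      ((fderiv ℝ E z).comp (ContinuousLinearMap.inl ℝ _ _)) := by
  have h1 : HasFDerivAt (fun φ => E (φ, z.2))
      ((fderiv ℝ E z).comp (ContinuousLinearMap.inl ℝ _ _)) z.1 :=
    (hEd z).hasFDerivAt.comp z.1 (hasFDerivAt_prodMk_left z.1 z.2)
  unfold gradPhi gradient
  rw [h1.fderiv]

lemma gradTheta_eq {m n : ℕ} (E : EuclideanSpace ℝ (Fin m) × EuclideanSpace ℝ (Fin n) → ℝ)
    (hEd : Differentiable ℝ E) (z : EuclideanSpace ℝ (Fin m) × EuclideanSpace ℝ (Fin n)) :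
    gradTheta E z = (toDual ℝ (EuclideanSpace ℝ (Fin n))).symm
      ((fderiv ℝ E z).comp (ContinuousLinearMap.inr ℝ _ _)) := by
  have h1 : HasFDerivAt (fun θ => E (z.1, θ))
      ((fderiv ℝ E z).comp (ContinuousLinearMap.inr ℝ _ _)) z.2 :=
    (hEd z).hasFDerivAt.comp z.2 (hasFDerivAt_prodMk_right z.1 z.2)
  unfold gradTheta gradient
  rw [h1.fderiv]

-- the "lower to gradient" continuous linear map
def lowerPhi (m n : ℕ) : ((EuclideanSpace ℝ (Fin m) × EuclideanSpace ℝ (Fin n)) →L[ℝ] ℝ)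
    →L[ℝ] EuclideanSpace ℝ (Fin m) :=
  ((toDual ℝ (EuclideanSpace ℝ (Fin m))).symm.toLinearIsometry.toContinuousLinearMap).comp
    ((ContinuousLinearMap.compL ℝ (EuclideanSpace ℝ (Fin m))
      (EuclideanSpace ℝ (Fin m) × EuclideanSpace ℝ (Fin n)) ℝ).flip
      (ContinuousLinearMap.inl ℝ _ _))

def lowerTheta (m n : ℕ) : ((EuclideanSpace ℝ (Fin m) × EuclideanSpace ℝ (Fin n)) →L[ℝ] ℝ)
    →L[ℝ] EuclideanSpace ℝ (Fin n) :=
  ((toDual ℝ (EuclideanSpace ℝ (Fin n))).symm.toLinearIsometry.toContinuousLinearMap).comp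
    ((ContinuousLinearMap.compL ℝ (EuclideanSpace ℝ (Fin n))
      (EuclideanSpace ℝ (Fin m) × EuclideanSpace ℝ (Fin n)) ℝ).flip
      (ContinuousLinearMap.inr ℝ _ _))

lemma lowerPhi_apply {m n : ℕ} (T : (EuclideanSpace ℝ (Fin m) × EuclideanSpace ℝ (Fin n)) →L[ℝ] ℝ) :
    lowerPhi m n T = (toDual ℝ (EuclideanSpace ℝ (Fin m))).symm
      (T.comp (ContinuousLinearMap.inl ℝ _ _)) := rfl

lemma lowerTheta_apply {m n : ℕ} (T : (EuclideanSpace ℝ (Fin m) × EuclideanSpace ℝ (Fin n)) →L[ℝ] ℝ) :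
    lowerTheta m n T = (toDual ℝ (EuclideanSpace ℝ (Fin n))).symm
      (T.comp (ContinuousLinearMap.inr ℝ _ _)) := rfl

lemma hasFDerivAt_gradPhi {m n : ℕ} (E : EuclideanSpace ℝ (Fin m) × EuclideanSpace ℝ (Fin n) → ℝ)
    (hE : ContDiff ℝ 3 E) (z : EuclideanSpace ℝ (Fin m) × EuclideanSpace ℝ (Fin n)) :
    HasFDerivAt (fun z => gradPhi E z)
      ((lowerPhi m n).comp (fderiv ℝ (fderiv ℝ E) z)) z := by
  have hEd : Differentiable ℝ E := hE.differentiable (by norm_num)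
  have hE' : ContDiff ℝ 2 (fderiv ℝ E) := hE.fderiv_right (by norm_num)
  have hE'd : Differentiable ℝ (fderiv ℝ E) := hE'.differentiable (by norm_num)
  have hfun : (fun z => gradPhi E z) = fun z => lowerPhi m n (fderiv ℝ E z) := by
    funext z; rw [gradPhi_eq E hEd z, lowerPhi_apply]
  rw [hfun]
  exact (lowerPhi m n).hasFDerivAt.comp z (hE'd z).hasFDerivAt

lemma hasFDerivAt_gradTheta {m n : ℕ} (E : EuclideanSpace ℝ (Fin m) × EuclideanSpace ℝ (Fin n) → ℝ)
    (hE : ContDiff ℝ 3 E) (z : EuclideanSpace ℝ (Fin m) × EuclideanSpace ℝ (Fin n)) :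
    HasFDerivAt (fun z => gradTheta E z)
      ((lowerTheta m n).comp (fderiv ℝ (fderiv ℝ E) z)) z := by
  have hEd : Differentiable ℝ E := hE.differentiable (by norm_num)
  have hE' : ContDiff ℝ 2 (fderiv ℝ E) := hE.fderiv_right (by norm_num)
  have hE'd : Differentiable ℝ (fderiv ℝ E) := hE'.differentiable (by norm_num)
  have hfun : (fun z => gradTheta E z) = fun z => lowerTheta m n (fderiv ℝ E z) := by
    funext z; rw [gradTheta_eq E hEd z, lowerTheta_apply]
  rw [hfun]
  exact (lowerTheta m n).hasFDerivAt.comp z (hE'd z).hasFDerivAt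

lemma lowerPhi_inner {m n : ℕ} (T : (EuclideanSpace ℝ (Fin m) × EuclideanSpace ℝ (Fin n)) →L[ℝ] ℝ)
    (v : EuclideanSpace ℝ (Fin m)) :
    @inner ℝ _ _ (lowerPhi m n T) v = T (v, 0) := by
  rw [lowerPhi_apply, toDual_symm_apply]
  rfl

lemma lowerTheta_inner {m n : ℕ} (T : (EuclideanSpace ℝ (Fin m) × EuclideanSpace ℝ (Fin n)) →L[ℝ] ℝ)
    (v : EuclideanSpace ℝ (Fin n)) :
    @inner ℝ _ _ (lowerTheta m n T) v = T (0, v) := by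
  rw [lowerTheta_apply, toDual_symm_apply]
  rfl

-- differentiability of z ↦ fderiv (gradPhi E) z  at a point
lemma diff_fderiv_gradPhi {m n : ℕ} (E : EuclideanSpace ℝ (Fin m) × EuclideanSpace ℝ (Fin n) → ℝ)
    (hE : ContDiff ℝ 3 E) (z : EuclideanSpace ℝ (Fin m) × EuclideanSpace ℝ (Fin n)) :
    DifferentiableAt ℝ (fun z => fderiv ℝ (fun z => gradPhi E z) z) z := by
  have hE' : ContDiff ℝ 2 (fderiv ℝ E) := hE.fderiv_right (by norm_num)
  have hE'' : ContDiff ℝ 1 (fderiv ℝ (fderiv ℝ E)) := hE'.fderiv_right (by norm_num)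
  have hE''d : Differentiable ℝ (fderiv ℝ (fderiv ℝ E)) := hE''.differentiable (by norm_num)
  have hfun : (fun z => fderiv ℝ (fun z => gradPhi E z) z)
      = fun z => (ContinuousLinearMap.compL ℝ
          (EuclideanSpace ℝ (Fin m) × EuclideanSpace ℝ (Fin n))
          ((EuclideanSpace ℝ (Fin m) × EuclideanSpace ℝ (Fin n)) →L[ℝ] ℝ)
          (EuclideanSpace ℝ (Fin m)) (lowerPhi m n)) (fderiv ℝ (fderiv ℝ E) z) := by
    funext z
    rw [(hasFDerivAt_gradPhi E hE z).fderiv]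
    rfl
  rw [hfun]
  exact ((ContinuousLinearMap.compL ℝ _ _ _ (lowerPhi m n)).differentiableAt).comp z (hE''d z)

lemma diff_fderiv_gradTheta {m n : ℕ} (E : EuclideanSpace ℝ (Fin m) × EuclideanSpace ℝ (Fin n) → ℝ)
    (hE : ContDiff ℝ 3 E) (z : EuclideanSpace ℝ (Fin m) × EuclideanSpace ℝ (Fin n)) :
    DifferentiableAt ℝ (fun z => fderiv ℝ (fun z => gradTheta E z) z) z := by
  have hE' : ContDiff ℝ 2 (fderiv ℝ E) := hE.fderiv_right (by norm_num)
  have hE'' : ContDiff ℝ 1 (fderiv ℝ (fderiv ℝ E)) := hE'.fderiv_right (by norm_num)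
  have hE''d : Differentiable ℝ (fderiv ℝ (fderiv ℝ E)) := hE''.differentiable (by norm_num)
  have hfun : (fun z => fderiv ℝ (fun z => gradTheta E z) z)
      = fun z => (ContinuousLinearMap.compL ℝ
          (EuclideanSpace ℝ (Fin m) × EuclideanSpace ℝ (Fin n))
          ((EuclideanSpace ℝ (Fin m) × EuclideanSpace ℝ (Fin n)) →L[ℝ] ℝ)
          (EuclideanSpace ℝ (Fin n)) (lowerTheta m n)) (fderiv ℝ (fderiv ℝ E) z) := by
    funext z
    rw [(hasFDerivAt_gradTheta E hE z).fderiv]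
    rfl
  rw [hfun]
  exact ((ContinuousLinearMap.compL ℝ _ _ _ (lowerTheta m n)).differentiableAt).comp z (hE''d z)

section blocks
variable {m n : ℕ} (E : EuclideanSpace ℝ (Fin m) × EuclideanSpace ℝ (Fin n) → ℝ)
  (hE : ContDiff ℝ 3 E) (zs : EuclideanSpace ℝ (Fin m) × EuclideanSpace ℝ (Fin n))
include hE

lemma inner_dPhi_gradPhi (u v : EuclideanSpace ℝ (Fin m)) :
    @inner ℝ _ _ (dPhi (fun z => gradPhi E z) zs u) v
      = fderiv ℝ (fderiv ℝ E) zs (u, 0) (v, 0) := by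
  show @inner ℝ _ _ ((fderiv ℝ (fun z => gradPhi E z) zs) (u, 0)) v = _
  rw [(hasFDerivAt_gradPhi E hE zs).fderiv, ContinuousLinearMap.comp_apply, lowerPhi_inner]

lemma inner_dTheta_gradPhi (u : EuclideanSpace ℝ (Fin n)) (v : EuclideanSpace ℝ (Fin m)) :
    @inner ℝ _ _ (dTheta (fun z => gradPhi E z) zs u) v
      = fderiv ℝ (fderiv ℝ E) zs (0, u) (v, 0) := by
  show @inner ℝ _ _ ((fderiv ℝ (fun z => gradPhi E z) zs) (0, u)) v = _
  rw [(hasFDerivAt_gradPhi E hE zs).fderiv, ContinuousLinearMap.comp_apply, lowerPhi_inner]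

lemma inner_dPhi_gradTheta (u : EuclideanSpace ℝ (Fin m)) (v : EuclideanSpace ℝ (Fin n)) :
    @inner ℝ _ _ (dPhi (fun z => gradTheta E z) zs u) v
      = fderiv ℝ (fderiv ℝ E) zs (u, 0) (0, v) := by
  show @inner ℝ _ _ ((fderiv ℝ (fun z => gradTheta E z) zs) (u, 0)) v = _
  rw [(hasFDerivAt_gradTheta E hE zs).fderiv, ContinuousLinearMap.comp_apply, lowerTheta_inner]

lemma inner_dTheta_gradTheta (u v : EuclideanSpace ℝ (Fin n)) :
    @inner ℝ _ _ (dTheta (fun z => gradTheta E z) zs u) v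
      = fderiv ℝ (fderiv ℝ E) zs (0, u) (0, v) := by
  show @inner ℝ _ _ ((fderiv ℝ (fun z => gradTheta E z) zs) (0, u)) v = _
  rw [(hasFDerivAt_gradTheta E hE zs).fderiv, ContinuousLinearMap.comp_apply, lowerTheta_inner]

lemma adjoint_dPhi_gradPhi :
    ContinuousLinearMap.adjoint (dPhi (fun z => gradPhi E z) zs)
      = dPhi (fun z => gradPhi E z) zs := by
  have hsymm := hE.contDiffAt.isSymmSndFDerivAt (x := zs) (by norm_num)
  refine ContinuousLinearMap.ext fun u => ext_inner_right ℝ fun v => ?_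
  rw [ContinuousLinearMap.adjoint_inner_left, real_inner_comm,
    inner_dPhi_gradPhi E hE zs, inner_dPhi_gradPhi E hE zs, hsymm (v, 0) (u, 0)]

lemma adjoint_dPhi_gradTheta :
    ContinuousLinearMap.adjoint (dPhi (fun z => gradTheta E z) zs)
      = dTheta (fun z => gradPhi E z) zs := by
  have hsymm := hE.contDiffAt.isSymmSndFDerivAt (x := zs) (by norm_num)
  refine ContinuousLinearMap.ext fun u => ext_inner_right ℝ fun v => ?_
  rw [ContinuousLinearMap.adjoint_inner_left, real_inner_comm,
    inner_dPhi_gradTheta E hE zs, inner_dTheta_gradPhi E hE zs, hsymm (v, 0) (0, u)]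

lemma adjoint_dTheta_gradTheta :
    ContinuousLinearMap.adjoint (dTheta (fun z => gradTheta E z) zs)
      = dTheta (fun z => gradTheta E z) zs := by
  have hsymm := hE.contDiffAt.isSymmSndFDerivAt (x := zs) (by norm_num)
  refine ContinuousLinearMap.ext fun u => ext_inner_right ℝ fun v => ?_
  rw [ContinuousLinearMap.adjoint_inner_left, real_inner_comm,
    inner_dTheta_gradTheta E hE zs, inner_dTheta_gradTheta E hE zs, hsymm (0, v) (0, u)]

end blocks

lemma trace_blocks {M N : Type*} [AddCommGroup M] [Module ℝ M] [AddCommGroup N] [Module ℝ N]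
    [Module.Finite ℝ M] [Module.Free ℝ M] [Module.Finite ℝ N] [Module.Free ℝ N]
    (l : (M × N) →ₗ[ℝ] (M × N)) :
    LinearMap.trace ℝ (M × N) l =
      LinearMap.trace ℝ M ((LinearMap.fst ℝ M N) ∘ₗ (l ∘ₗ (LinearMap.inl ℝ M N))) +
      LinearMap.trace ℝ N ((LinearMap.snd ℝ M N) ∘ₗ (l ∘ₗ (LinearMap.inr ℝ M N))) := by
  have h1 : l = (l ∘ₗ (LinearMap.inl ℝ M N)) ∘ₗ (LinearMap.fst ℝ M N)
      + (l ∘ₗ (LinearMap.inr ℝ M N)) ∘ₗ (LinearMap.snd ℝ M N) := by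
    ext x <;>
      simp [LinearMap.comp_apply, ← map_add]
  calc LinearMap.trace ℝ (M × N) l
      = LinearMap.trace ℝ (M × N) ((l ∘ₗ (LinearMap.inl ℝ M N)) ∘ₗ (LinearMap.fst ℝ M N))
        + LinearMap.trace ℝ (M × N) ((l ∘ₗ (LinearMap.inr ℝ M N)) ∘ₗ (LinearMap.snd ℝ M N)) := by
        rw [← map_add]; exact congrArg _ h1
    _ = _ := by
        rw [LinearMap.trace_comp_comm' (LinearMap.fst ℝ M N) (l ∘ₗ (LinearMap.inl ℝ M N)),
          LinearMap.trace_comp_comm' (LinearMap.snd ℝ M N) (l ∘ₗ (LinearMap.inr ℝ M N))]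

lemma comp_prod_decomp {V W : Type*} [NormedAddCommGroup V] [NormedSpace ℝ V]
    [NormedAddCommGroup W] [NormedSpace ℝ W]
    {M N : Type*} [NormedAddCommGroup M] [NormedSpace ℝ M] [NormedAddCommGroup N] [NormedSpace ℝ N]
    (T : (M × N) →L[ℝ] W) (X : V →L[ℝ] M) (Y : V →L[ℝ] N) :
    T ∘L (X.prod Y) = (T ∘L ContinuousLinearMap.inl ℝ M N) ∘L X
      + (T ∘L ContinuousLinearMap.inr ℝ M N) ∘L Y := by
  ext v
  simp only [ContinuousLinearMap.comp_apply, ContinuousLinearMap.prod_apply,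
    ContinuousLinearMap.add_apply, ContinuousLinearMap.inl_apply, ContinuousLinearMap.inr_apply]
  rw [← map_add]
  simp

lemma fst_prod_comp {M N W : Type*} [NormedAddCommGroup M] [NormedSpace ℝ M]
    [NormedAddCommGroup N] [NormedSpace ℝ N] [NormedAddCommGroup W] [NormedSpace ℝ W]
    (U : (M × N) →L[ℝ] M) (V : (M × N) →L[ℝ] N) (K : W →L[ℝ] (M × N)) :
    (ContinuousLinearMap.fst ℝ M N).comp ((U.prod V).comp K) = U.comp K := by
  ext w; rfl

lemma snd_prod_comp {M N W : Type*} [NormedAddCommGroup M] [NormedSpace ℝ M]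
    [NormedAddCommGroup N] [NormedSpace ℝ N] [NormedAddCommGroup W] [NormedSpace ℝ W]
    (U : (M × N) →L[ℝ] M) (V : (M × N) →L[ℝ] N) (K : W →L[ℝ] (M × N)) :
    (ContinuousLinearMap.snd ℝ M N).comp ((U.prod V).comp K) = V.comp K := by
  ext w; rfl

lemma trace_blocks_clm {M N : Type*} [NormedAddCommGroup M] [NormedSpace ℝ M]
    [NormedAddCommGroup N] [NormedSpace ℝ N] [FiniteDimensional ℝ M] [FiniteDimensional ℝ N]
    (X : (M × N) →L[ℝ] (M × N)) :
    LinearMap.trace ℝ (M × N) (X : (M × N) →ₗ[ℝ] (M × N)) =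
      LinearMap.trace ℝ M
        (((ContinuousLinearMap.fst ℝ M N).comp (X.comp (ContinuousLinearMap.inl ℝ M N)) :
          M →L[ℝ] M) : M →ₗ[ℝ] M) +
      LinearMap.trace ℝ N
        (((ContinuousLinearMap.snd ℝ M N).comp (X.comp (ContinuousLinearMap.inr ℝ M N)) :
          N →L[ℝ] N) : N →ₗ[ℝ] N) := by
  rw [trace_blocks (X : (M × N) →ₗ[ℝ] (M × N))]
  congr 1 <;> exact congrArg _ (LinearMap.ext fun u => rfl)

set_option maxHeartbeats 2000000 in
/-- **Trace of the modified Jacobian in zero-sum games (simultaneous gradient descent).**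
With `f = ∇_φ E`, `g = −∇_θ E`, at an equilibrium,
`Tr(J̃) = Tr(J) − (h/2)(α‖∇_{φφ}E‖_F² + λ‖∇_{θθ}E‖_F²) + (h/2)(α + λ)‖∇_{φθ}E‖_F²`. -/
theorem modified_jacobian_trace_zero_sum {m n : ℕ}
    (E : EuclideanSpace ℝ (Fin m) × EuclideanSpace ℝ (Fin n) → ℝ)
    (hE : ContDiff ℝ 3 E)
    (f : EuclideanSpace ℝ (Fin m) × EuclideanSpace ℝ (Fin n) → EuclideanSpace ℝ (Fin m))
    (g : EuclideanSpace ℝ (Fin m) × EuclideanSpace ℝ (Fin n) → EuclideanSpace ℝ (Fin n))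
    (hfdef : f = fun z => gradPhi E z) (hgdef : g = fun z => -gradTheta E z)
    (zs : EuclideanSpace ℝ (Fin m) × EuclideanSpace ℝ (Fin n))
    (hfz : f zs = 0) (hgz : g zs = 0)
    (α lam h : ℝ) (hα : 0 < α) (hlam : 0 < lam) (hh : 0 < h)
    (Ftilde : EuclideanSpace ℝ (Fin m) × EuclideanSpace ℝ (Fin n) →
      EuclideanSpace ℝ (Fin m) × EuclideanSpace ℝ (Fin n))
    (hFtilde : Ftilde = fun z =>
      (f z - (α * h / 2) • fderiv ℝ f z (f z, g z),
       g z - (lam * h / 2) • fderiv ℝ g z (f z, g z))) :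
    LinearMap.trace ℝ (EuclideanSpace ℝ (Fin m) × EuclideanSpace ℝ (Fin n))
        (fderiv ℝ Ftilde zs : _ →ₗ[ℝ] _) =
      LinearMap.trace ℝ (EuclideanSpace ℝ (Fin m) × EuclideanSpace ℝ (Fin n))
          (fderiv ℝ (fun z => (f z, g z)) zs : _ →ₗ[ℝ] _) -
        (h / 2) *
          (α * frobSq (dPhi (fun z => gradPhi E z) zs) +
            lam * frobSq (dTheta (fun z => gradTheta E z) zs)) +
        (h / 2) * (α + lam) * frobSq (dPhi (fun z => gradTheta E z) zs) := by
  subst hFtilde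
  -- abbreviations
  set B2 := fderiv ℝ (fderiv ℝ E) zs with hB2
  set Df := (lowerPhi m n).comp B2 with hDfdef
  set Dθ := (lowerTheta m n).comp B2 with hDθdef
  have hf_has : HasFDerivAt f Df zs := by rw [hfdef]; exact hasFDerivAt_gradPhi E hE zs
  have hθ_has : HasFDerivAt (fun z => gradTheta E z) Dθ zs := hasFDerivAt_gradTheta E hE zs
  have hg_has : HasFDerivAt g (-Dθ) zs := by rw [hgdef]; exact hθ_has.neg
  set J := Df.prod (-Dθ) with hJdef
  have hF_has : HasFDerivAt (fun z => (f z, g z)) J zs := hf_has.prodMk hg_has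
  have hFzs : (f zs, g zs) = (0, 0) := by rw [hfz, hgz]
  -- derivatives of the correction terms
  have hdc1 : DifferentiableAt ℝ (fun z => fderiv ℝ f z) zs := by
    rw [hfdef]; exact diff_fderiv_gradPhi E hE zs
  have hdc2 : DifferentiableAt ℝ (fun z => fderiv ℝ g z) zs := by
    rw [hgdef]
    have hfun : (fun z => fderiv ℝ (fun z => -gradTheta E z) z)
        = fun z => -(fderiv ℝ (fun z => gradTheta E z) z) := by
      funext z; exact fderiv_neg
    rw [hfun]
    exact (diff_fderiv_gradTheta E hE zs).neg
  have hc1 : HasFDerivAt (fun z => fderiv ℝ f z (f z, g z)) (Df.comp J) zs := by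
    have hcl := hdc1.hasFDerivAt.clm_apply hF_has
    rw [hf_has.fderiv, hFzs] at hcl
    simpa [Prod.mk_zero_zero] using hcl
  have hc2 : HasFDerivAt (fun z => fderiv ℝ g z (f z, g z)) ((-Dθ).comp J) zs := by
    have hcl := hdc2.hasFDerivAt.clm_apply hF_has
    rw [hg_has.fderiv, hFzs] at hcl
    simpa [Prod.mk_zero_zero] using hcl
  have hFt_has : HasFDerivAt
      (fun z => (f z - (α * h / 2) • fderiv ℝ f z (f z, g z),
        g z - (lam * h / 2) • fderiv ℝ g z (f z, g z)))
      ((Df - (α * h / 2) • Df.comp J).prod ((-Dθ) - (lam * h / 2) • (-Dθ).comp J)) zs :=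
    (hf_has.sub (hc1.const_smul (α * h / 2))).prodMk (hg_has.sub (hc2.const_smul (lam * h / 2)))
  rw [hFt_has.fderiv, hF_has.fderiv]
  -- decompose compositions with J
  have hJd_f : Df.comp J
      = (Df.comp (ContinuousLinearMap.inl ℝ (EuclideanSpace ℝ (Fin m)) (EuclideanSpace ℝ (Fin n)))).comp Df
        + (Df.comp (ContinuousLinearMap.inr ℝ (EuclideanSpace ℝ (Fin m)) (EuclideanSpace ℝ (Fin n)))).comp (-Dθ) := by
    rw [hJdef]; exact comp_prod_decomp Df Df (-Dθ)
  have hJd_g : (-Dθ).comp J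
      = ((-Dθ).comp (ContinuousLinearMap.inl ℝ (EuclideanSpace ℝ (Fin m)) (EuclideanSpace ℝ (Fin n)))).comp Df
        + ((-Dθ).comp (ContinuousLinearMap.inr ℝ (EuclideanSpace ℝ (Fin m)) (EuclideanSpace ℝ (Fin n)))).comp (-Dθ) := by
    rw [hJdef]; exact comp_prod_decomp (-Dθ) Df (-Dθ)
  -- name the four Hessian blocks
  have hA : dPhi (fun z => gradPhi E z) zs
      = Df.comp (ContinuousLinearMap.inl ℝ (EuclideanSpace ℝ (Fin m)) (EuclideanSpace ℝ (Fin n))) := by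
    unfold dPhi
    rw [(hasFDerivAt_gradPhi E hE zs).fderiv, ← hB2, ← hDfdef]
  have hBB : dTheta (fun z => gradPhi E z) zs
      = Df.comp (ContinuousLinearMap.inr ℝ (EuclideanSpace ℝ (Fin m)) (EuclideanSpace ℝ (Fin n))) := by
    unfold dTheta
    rw [(hasFDerivAt_gradPhi E hE zs).fderiv, ← hB2, ← hDfdef]
  have hCC : dPhi (fun z => gradTheta E z) zs
      = Dθ.comp (ContinuousLinearMap.inl ℝ (EuclideanSpace ℝ (Fin m)) (EuclideanSpace ℝ (Fin n))) := by
    unfold dPhi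
    rw [(hasFDerivAt_gradTheta E hE zs).fderiv, ← hB2, ← hDθdef]
  have hDD : dTheta (fun z => gradTheta E z) zs
      = Dθ.comp (ContinuousLinearMap.inr ℝ (EuclideanSpace ℝ (Fin m)) (EuclideanSpace ℝ (Fin n))) := by
    unfold dTheta
    rw [(hasFDerivAt_gradTheta E hE zs).fderiv, ← hB2, ← hDθdef]
  -- trace identities for the quadratic blocks
  have hfA : LinearMap.trace ℝ (EuclideanSpace ℝ (Fin m))
      (((Df.comp (ContinuousLinearMap.inl ℝ (EuclideanSpace ℝ (Fin m)) (EuclideanSpace ℝ (Fin n)))).comp (Df.comp (ContinuousLinearMap.inl ℝ (EuclideanSpace ℝ (Fin m)) (EuclideanSpace ℝ (Fin n)))) : _ →L[ℝ] _) : _ →ₗ[ℝ] _)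
      = frobSq (dPhi (fun z => gradPhi E z) zs) := by
    rw [frobSq, adjoint_dPhi_gradPhi E hE zs, hA]
  have hfD : LinearMap.trace ℝ (EuclideanSpace ℝ (Fin n))
      (((Dθ.comp (ContinuousLinearMap.inr ℝ (EuclideanSpace ℝ (Fin m)) (EuclideanSpace ℝ (Fin n)))).comp (Dθ.comp (ContinuousLinearMap.inr ℝ (EuclideanSpace ℝ (Fin m)) (EuclideanSpace ℝ (Fin n)))) : _ →L[ℝ] _) : _ →ₗ[ℝ] _)
      = frobSq (dTheta (fun z => gradTheta E z) zs) := by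
    rw [frobSq, adjoint_dTheta_gradTheta E hE zs, hDD]
  have hfC1 : LinearMap.trace ℝ (EuclideanSpace ℝ (Fin m))
      (((Df.comp (ContinuousLinearMap.inr ℝ (EuclideanSpace ℝ (Fin m)) (EuclideanSpace ℝ (Fin n)))).comp (Dθ.comp (ContinuousLinearMap.inl ℝ (EuclideanSpace ℝ (Fin m)) (EuclideanSpace ℝ (Fin n)))) : _ →L[ℝ] _) : _ →ₗ[ℝ] _)
      = frobSq (dPhi (fun z => gradTheta E z) zs) := by
    rw [frobSq, adjoint_dPhi_gradTheta E hE zs, hBB, hCC]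
  have hfC2 : LinearMap.trace ℝ (EuclideanSpace ℝ (Fin n))
      (((Dθ.comp (ContinuousLinearMap.inl ℝ (EuclideanSpace ℝ (Fin m)) (EuclideanSpace ℝ (Fin n)))).comp (Df.comp (ContinuousLinearMap.inr ℝ (EuclideanSpace ℝ (Fin m)) (EuclideanSpace ℝ (Fin n)))) : _ →L[ℝ] _) : _ →ₗ[ℝ] _)
      = frobSq (dPhi (fun z => gradTheta E z) zs) := by
    rw [← hfC1]
    exact LinearMap.trace_comp_comm'
      ((Df.comp (ContinuousLinearMap.inr ℝ (EuclideanSpace ℝ (Fin m)) (EuclideanSpace ℝ (Fin n))) : EuclideanSpace ℝ (Fin n) →L[ℝ] EuclideanSpace ℝ (Fin m))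
        : EuclideanSpace ℝ (Fin n) →ₗ[ℝ] EuclideanSpace ℝ (Fin m))
      ((Dθ.comp (ContinuousLinearMap.inl ℝ (EuclideanSpace ℝ (Fin m)) (EuclideanSpace ℝ (Fin n))) : EuclideanSpace ℝ (Fin m) →L[ℝ] EuclideanSpace ℝ (Fin n))
        : EuclideanSpace ℝ (Fin m) →ₗ[ℝ] EuclideanSpace ℝ (Fin n))
  -- make the abbreviations opaque so that rewriting does not unfold them
  clear_value B2 Df Dθ J
  simp only [ContinuousLinearMap.comp_assoc] at hfA hfD hfC1 hfC2
  rw [hJd_f, hJd_g, hJdef]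
  rw [trace_blocks_clm, trace_blocks_clm]
  rw [fst_prod_comp, snd_prod_comp, fst_prod_comp, snd_prod_comp]
  simp only [ContinuousLinearMap.sub_comp, ContinuousLinearMap.smul_comp,
    ContinuousLinearMap.add_comp, ContinuousLinearMap.comp_assoc,
    ContinuousLinearMap.neg_comp, ContinuousLinearMap.comp_neg, neg_neg,
    ContinuousLinearMap.coe_sub, ContinuousLinearMap.coe_smul, ContinuousLinearMap.coe_add,
    ContinuousLinearMap.coe_neg, map_sub, map_smul, map_add, map_neg, smul_eq_mul]
  rw [hfA, hfD, hfC1, hfC2]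
  ring
end
end

section
/- Let f : ℝ^m × ℝ^n → ℝ^m and g : ℝ^m × ℝ^n → ℝ^n be twice continuously differentiable, let (φ*, θ*) satisfy f(φ*, θ*) = 0 and g(φ*, θ*) = 0, and let f̃ = f − (αh/2)((1/m)f·∇_φ f + g·∇_θ f), g̃ = g − (λh/2)((1 − 2α/λ)f·∇_φ g + (1/k)g·∇_θ g) be the modified vector fields of alternating gradient descent with m and k sub-steps. Then the Jacobian of (f̃, g̃) at (φ*, θ*) equals J − (h/2)·K_alt, where J is the Jacobian of (f, g) at (φ*, θ*) and K_alt has blocks (α/m)(∇_φ f)² + α∇_φ g·∇_θ f; (α/m)∇_θ f·∇_φ f + α∇_θ g·∇_θ f; (λ/k)∇_φ g·∇_θ g + λ(1 − 2α/λ)∇_φ f·∇_φ g; (λ/k)(∇_θ g)² + λ(1 − 2α/λ)∇_θ f·∇_φ g. In particular Tr(J̃) = Tr(J) − (h/2)((α/m)Tr((∇_φ f)²) + (λ/k)Tr((∇_θ g)²)) − (h/2)(λ − α)Tr(∇_φ g·∇_θ f). -/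
noncomputable section

lemma trace_block {E F : Type*} [NormedAddCommGroup E] [NormedSpace ℝ E]
    [NormedAddCommGroup F] [NormedSpace ℝ F] [FiniteDimensional ℝ E] [FiniteDimensional ℝ F]
    (A : E →L[ℝ] E) (B : F →L[ℝ] E) (C : E →L[ℝ] F) (D : F →L[ℝ] F) :
    LinearMap.trace ℝ (E × F) (((A.coprod B).prod (C.coprod D) : E × F →L[ℝ] E × F) : E × F →ₗ[ℝ] E × F)
      = LinearMap.trace ℝ E (A : E →ₗ[ℝ] E) + LinearMap.trace ℝ F (D : F →ₗ[ℝ] F) := by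
  have hdecomp : (((A.coprod B).prod (C.coprod D) : E × F →L[ℝ] E × F) : E × F →ₗ[ℝ] E × F)
      = LinearMap.prodMap (A : E →ₗ[ℝ] E) (D : F →ₗ[ℝ] F)
        + (LinearMap.inl ℝ E F ∘ₗ (B : F →ₗ[ℝ] E) ∘ₗ LinearMap.snd ℝ E F)
        + (LinearMap.inr ℝ E F ∘ₗ (C : E →ₗ[ℝ] F) ∘ₗ LinearMap.fst ℝ E F) := by
    apply LinearMap.ext
    rintro ⟨x, y⟩
    simp [Prod.ext_iff, add_comm]
  rw [hdecomp, map_add, map_add, LinearMap.trace_prodMap']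
  have hB : LinearMap.trace ℝ (E × F) (LinearMap.inl ℝ E F ∘ₗ (B : F →ₗ[ℝ] E) ∘ₗ LinearMap.snd ℝ E F) = 0 := by
    rw [← LinearMap.comp_assoc, LinearMap.trace_comp_comm', ← LinearMap.comp_assoc]
    simp
  have hC : LinearMap.trace ℝ (E × F) (LinearMap.inr ℝ E F ∘ₗ (C : E →ₗ[ℝ] F) ∘ₗ LinearMap.fst ℝ E F) = 0 := by
    rw [← LinearMap.comp_assoc, LinearMap.trace_comp_comm', ← LinearMap.comp_assoc]
    simp
  rw [hB, hC]; ring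

set_option maxHeartbeats 2000000 in
/-- **Modified Jacobian at an equilibrium (alternating gradient descent).**
At an equilibrium `f = 0 = g`, the Jacobian of the modified vector field of alternating
gradient descent equals `J − (h/2)·K_alt`, and in particular
`Tr(J̃) = Tr(J) − (h/2)((α/m)Tr((∇_φ f)²) + (λ/k)Tr((∇_θ g)²)) − (h/2)(λ − α)Tr(∇_φ g·∇_θ f)`. -/
theorem modified_jacobian_alternating {m n : ℕ}
    (f : EuclideanSpace ℝ (Fin m) × EuclideanSpace ℝ (Fin n) → EuclideanSpace ℝ (Fin m))
    (g : EuclideanSpace ℝ (Fin m) × EuclideanSpace ℝ (Fin n) → EuclideanSpace ℝ (Fin n))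
    (hf : ContDiff ℝ 2 f) (hg : ContDiff ℝ 2 g)
    (zs : EuclideanSpace ℝ (Fin m) × EuclideanSpace ℝ (Fin n))
    (hfz : f zs = 0) (hgz : g zs = 0)
    (α lam h : ℝ) (hα : 0 < α) (hlam : 0 < lam) (hh : 0 < h)
    (msub ksub : ℕ) (hmsub : 0 < msub) (hksub : 0 < ksub)
    (Ftilde : EuclideanSpace ℝ (Fin m) × EuclideanSpace ℝ (Fin n) →
      EuclideanSpace ℝ (Fin m) × EuclideanSpace ℝ (Fin n))
    (hFtilde : Ftilde = fun z =>
      (f z - (α * h / 2) •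
          ((1 / (msub : ℝ)) • fderiv ℝ f z (f z, 0) + fderiv ℝ f z (0, g z)),
       g z - (lam * h / 2) •
          ((1 - 2 * α / lam) • fderiv ℝ g z (f z, 0) +
            (1 / (ksub : ℝ)) • fderiv ℝ g z (0, g z)))) :
    fderiv ℝ Ftilde zs =
      fderiv ℝ (fun z => (f z, g z)) zs -
        (h / 2) •
          (ContinuousLinearMap.prod
            (((α / (msub : ℝ)) • (dPhi f zs ∘L dPhi f zs) +
                α • (dTheta f zs ∘L dPhi g zs)).coprod
              ((α / (msub : ℝ)) • (dPhi f zs ∘L dTheta f zs) +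
                α • (dTheta f zs ∘L dTheta g zs)))
            (((lam / (ksub : ℝ)) • (dTheta g zs ∘L dPhi g zs) +
                (lam * (1 - 2 * α / lam)) • (dPhi g zs ∘L dPhi f zs)).coprod
              ((lam / (ksub : ℝ)) • (dTheta g zs ∘L dTheta g zs) +
                (lam * (1 - 2 * α / lam)) • (dPhi g zs ∘L dTheta f zs)))) ∧
    LinearMap.trace ℝ (EuclideanSpace ℝ (Fin m) × EuclideanSpace ℝ (Fin n))
        (fderiv ℝ Ftilde zs : _ →ₗ[ℝ] _) =
      LinearMap.trace ℝ (EuclideanSpace ℝ (Fin m) × EuclideanSpace ℝ (Fin n))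
          (fderiv ℝ (fun z => (f z, g z)) zs : _ →ₗ[ℝ] _) -
        (h / 2) *
          ((α / (msub : ℝ)) *
              LinearMap.trace ℝ (EuclideanSpace ℝ (Fin m)) (dPhi f zs ∘L dPhi f zs : _ →ₗ[ℝ] _) +
            (lam / (ksub : ℝ)) *
              LinearMap.trace ℝ (EuclideanSpace ℝ (Fin n)) (dTheta g zs ∘L dTheta g zs : _ →ₗ[ℝ] _)) -
        (h / 2) * (lam - α) *
          LinearMap.trace ℝ (EuclideanSpace ℝ (Fin m)) (dTheta f zs ∘L dPhi g zs : _ →ₗ[ℝ] _) := by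
  have hdf : Differentiable ℝ f := hf.differentiable two_ne_zero
  have hdg : Differentiable ℝ g := hg.differentiable two_ne_zero
  have hdf' : DifferentiableAt ℝ (fderiv ℝ f) zs :=
    ((hf.fderiv_right (le_refl 2)).differentiable one_ne_zero).differentiableAt
  have hdg' : DifferentiableAt ℝ (fderiv ℝ g) zs :=
    ((hg.fderiv_right (le_refl 2)).differentiable one_ne_zero).differentiableAt
  set A := fderiv ℝ f zs with hAdef
  set B := fderiv ℝ g zs with hBdef
  -- key pointwise derivative lemmas
  have key_f1 : HasFDerivAt (fun z => (fderiv ℝ f z) (f z, (0 : (EuclideanSpace ℝ (Fin n)))))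
      (A ∘L (A.prod 0)) zs := by
    have h1 := hdf'.hasFDerivAt.clm_apply ((hdf zs).hasFDerivAt.prodMk (hasFDerivAt_const (0 : (EuclideanSpace ℝ (Fin n))) zs))
    simpa [hfz, Prod.mk_zero_zero] using h1
  have key_f2 : HasFDerivAt (fun z => (fderiv ℝ f z) ((0 : (EuclideanSpace ℝ (Fin m))), g z))
      (A ∘L (ContinuousLinearMap.prod 0 B)) zs := by
    have h1 := hdf'.hasFDerivAt.clm_apply ((hasFDerivAt_const (0 : (EuclideanSpace ℝ (Fin m))) zs).prodMk (hdg zs).hasFDerivAt)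
    simpa [hgz, Prod.mk_zero_zero] using h1
  have key_g1 : HasFDerivAt (fun z => (fderiv ℝ g z) (f z, (0 : (EuclideanSpace ℝ (Fin n)))))
      (B ∘L (A.prod 0)) zs := by
    have h1 := hdg'.hasFDerivAt.clm_apply ((hdf zs).hasFDerivAt.prodMk (hasFDerivAt_const (0 : (EuclideanSpace ℝ (Fin n))) zs))
    simpa [hfz, Prod.mk_zero_zero] using h1
  have key_g2 : HasFDerivAt (fun z => (fderiv ℝ g z) ((0 : (EuclideanSpace ℝ (Fin m))), g z))
      (B ∘L (ContinuousLinearMap.prod 0 B)) zs := by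
    have h1 := hdg'.hasFDerivAt.clm_apply ((hasFDerivAt_const (0 : (EuclideanSpace ℝ (Fin m))) zs).prodMk (hdg zs).hasFDerivAt)
    simpa [hgz, Prod.mk_zero_zero] using h1
  have hF1 : HasFDerivAt (fun z =>
      f z - (α * h / 2) • ((1 / (msub : ℝ)) • fderiv ℝ f z (f z, 0) + fderiv ℝ f z (0, g z)))
      (A - (α * h / 2) • ((1 / (msub : ℝ)) • (A ∘L (A.prod 0)) + A ∘L (ContinuousLinearMap.prod 0 B))) zs :=
    (hdf zs).hasFDerivAt.sub (((key_f1.const_smul ((1 : ℝ) / msub)).add key_f2).const_smul (α * h / 2))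
  have hF2 : HasFDerivAt (fun z =>
      g z - (lam * h / 2) • ((1 - 2 * α / lam) • fderiv ℝ g z (f z, 0) +
        (1 / (ksub : ℝ)) • fderiv ℝ g z (0, g z)))
      (B - (lam * h / 2) • ((1 - 2 * α / lam) • (B ∘L (A.prod 0)) +
        (1 / (ksub : ℝ)) • (B ∘L (ContinuousLinearMap.prod 0 B)))) zs :=
    (hdg zs).hasFDerivAt.sub (((key_g1.const_smul ((1 : ℝ) - 2 * α / lam)).add
      (key_g2.const_smul ((1 : ℝ) / ksub))).const_smul (lam * h / 2))
  have hFt : HasFDerivAt Ftilde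
      ((A - (α * h / 2) • ((1 / (msub : ℝ)) • (A ∘L (A.prod 0)) + A ∘L (ContinuousLinearMap.prod 0 B))).prod
       (B - (lam * h / 2) • ((1 - 2 * α / lam) • (B ∘L (A.prod 0)) +
        (1 / (ksub : ℝ)) • (B ∘L (ContinuousLinearMap.prod 0 B))))) zs := by
    rw [hFtilde]; exact hF1.prodMk hF2
  have hJ : fderiv ℝ (fun z => (f z, g z)) zs = A.prod B :=
    DifferentiableAt.fderiv_prodMk (hdf zs) (hdg zs)
  have hA : (dPhi f zs).coprod (dTheta f zs) = A := by
    refine ContinuousLinearMap.ext ?_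
    rintro ⟨v, w⟩
    simp [dPhi, dTheta, ← map_add]
    rfl
  have hB : (dPhi g zs).coprod (dTheta g zs) = B := by
    refine ContinuousLinearMap.ext ?_
    rintro ⟨v, w⟩
    simp [dPhi, dTheta, ← map_add]
    rfl
  have hJac : fderiv ℝ Ftilde zs =
      fderiv ℝ (fun z => (f z, g z)) zs -
        (h / 2) •
          (ContinuousLinearMap.prod
            (((α / (msub : ℝ)) • (dPhi f zs ∘L dPhi f zs) +
                α • (dTheta f zs ∘L dPhi g zs)).coprod
              ((α / (msub : ℝ)) • (dPhi f zs ∘L dTheta f zs) +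
                α • (dTheta f zs ∘L dTheta g zs)))
            (((lam / (ksub : ℝ)) • (dTheta g zs ∘L dPhi g zs) +
                (lam * (1 - 2 * α / lam)) • (dPhi g zs ∘L dPhi f zs)).coprod
              ((lam / (ksub : ℝ)) • (dTheta g zs ∘L dTheta g zs) +
                (lam * (1 - 2 * α / lam)) • (dPhi g zs ∘L dTheta f zs)))) := by
    rw [hFt.fderiv, hJ, ← hA, ← hB]
    refine ContinuousLinearMap.ext ?_
    rintro ⟨v, w⟩
    refine Prod.ext ?_ ?_ <;>
      simp only [ContinuousLinearMap.sub_apply, ContinuousLinearMap.smul_apply,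
        ContinuousLinearMap.add_apply, ContinuousLinearMap.prod_apply,
        ContinuousLinearMap.coprod_apply, ContinuousLinearMap.comp_apply,
        ContinuousLinearMap.zero_apply, map_add, map_zero, add_zero, zero_add,
        Prod.mk_sub_mk, Prod.smul_mk, Prod.fst, Prod.snd] <;>
      module
  refine ⟨hJac, ?_⟩
  rw [hJac]
  have hcoe : ((fderiv ℝ (fun z => (f z, g z)) zs -
      (h / 2) • (ContinuousLinearMap.prod
            (((α / (msub : ℝ)) • (dPhi f zs ∘L dPhi f zs) +
                α • (dTheta f zs ∘L dPhi g zs)).coprod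
              ((α / (msub : ℝ)) • (dPhi f zs ∘L dTheta f zs) +
                α • (dTheta f zs ∘L dTheta g zs)))
            (((lam / (ksub : ℝ)) • (dTheta g zs ∘L dPhi g zs) +
                (lam * (1 - 2 * α / lam)) • (dPhi g zs ∘L dPhi f zs)).coprod
              ((lam / (ksub : ℝ)) • (dTheta g zs ∘L dTheta g zs) +
                (lam * (1 - 2 * α / lam)) • (dPhi g zs ∘L dTheta f zs)))) : ((EuclideanSpace ℝ (Fin m)) × (EuclideanSpace ℝ (Fin n))) →L[ℝ] (EuclideanSpace ℝ (Fin m)) × (EuclideanSpace ℝ (Fin n))) :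
        ((EuclideanSpace ℝ (Fin m)) × (EuclideanSpace ℝ (Fin n))) →ₗ[ℝ] (EuclideanSpace ℝ (Fin m)) × (EuclideanSpace ℝ (Fin n)))
      = ((fderiv ℝ (fun z => (f z, g z)) zs : ((EuclideanSpace ℝ (Fin m)) × (EuclideanSpace ℝ (Fin n))) →L[ℝ] (EuclideanSpace ℝ (Fin m)) × (EuclideanSpace ℝ (Fin n))) : ((EuclideanSpace ℝ (Fin m)) × (EuclideanSpace ℝ (Fin n))) →ₗ[ℝ] (EuclideanSpace ℝ (Fin m)) × (EuclideanSpace ℝ (Fin n)))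
        - (h / 2) • ((ContinuousLinearMap.prod
            (((α / (msub : ℝ)) • (dPhi f zs ∘L dPhi f zs) +
                α • (dTheta f zs ∘L dPhi g zs)).coprod
              ((α / (msub : ℝ)) • (dPhi f zs ∘L dTheta f zs) +
                α • (dTheta f zs ∘L dTheta g zs)))
            (((lam / (ksub : ℝ)) • (dTheta g zs ∘L dPhi g zs) +
                (lam * (1 - 2 * α / lam)) • (dPhi g zs ∘L dPhi f zs)).coprod
              ((lam / (ksub : ℝ)) • (dTheta g zs ∘L dTheta g zs) +
                (lam * (1 - 2 * α / lam)) • (dPhi g zs ∘L dTheta f zs))) : ((EuclideanSpace ℝ (Fin m)) × (EuclideanSpace ℝ (Fin n))) →L[ℝ] (EuclideanSpace ℝ (Fin m)) × (EuclideanSpace ℝ (Fin n))) :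
        ((EuclideanSpace ℝ (Fin m)) × (EuclideanSpace ℝ (Fin n))) →ₗ[ℝ] (EuclideanSpace ℝ (Fin m)) × (EuclideanSpace ℝ (Fin n))) := rfl
  rw [hcoe, map_sub, map_smul, trace_block]
  have e1 : ((((α / (msub : ℝ)) • (dPhi f zs ∘L dPhi f zs) +
      α • (dTheta f zs ∘L dPhi g zs)) : (EuclideanSpace ℝ (Fin m)) →L[ℝ] (EuclideanSpace ℝ (Fin m))) : (EuclideanSpace ℝ (Fin m)) →ₗ[ℝ] (EuclideanSpace ℝ (Fin m)))
      = (α / (msub : ℝ)) • ((dPhi f zs ∘L dPhi f zs : (EuclideanSpace ℝ (Fin m)) →L[ℝ] (EuclideanSpace ℝ (Fin m))) : (EuclideanSpace ℝ (Fin m)) →ₗ[ℝ] (EuclideanSpace ℝ (Fin m)))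
        + α • ((dTheta f zs ∘L dPhi g zs : (EuclideanSpace ℝ (Fin m)) →L[ℝ] (EuclideanSpace ℝ (Fin m))) : (EuclideanSpace ℝ (Fin m)) →ₗ[ℝ] (EuclideanSpace ℝ (Fin m))) := rfl
  have e2 : ((((lam / (ksub : ℝ)) • (dTheta g zs ∘L dTheta g zs) +
      (lam * (1 - 2 * α / lam)) • (dPhi g zs ∘L dTheta f zs)) : (EuclideanSpace ℝ (Fin n)) →L[ℝ] (EuclideanSpace ℝ (Fin n))) : (EuclideanSpace ℝ (Fin n)) →ₗ[ℝ] (EuclideanSpace ℝ (Fin n)))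
      = (lam / (ksub : ℝ)) • ((dTheta g zs ∘L dTheta g zs : (EuclideanSpace ℝ (Fin n)) →L[ℝ] (EuclideanSpace ℝ (Fin n))) : (EuclideanSpace ℝ (Fin n)) →ₗ[ℝ] (EuclideanSpace ℝ (Fin n)))
        + (lam * (1 - 2 * α / lam)) • ((dPhi g zs ∘L dTheta f zs : (EuclideanSpace ℝ (Fin n)) →L[ℝ] (EuclideanSpace ℝ (Fin n))) : (EuclideanSpace ℝ (Fin n)) →ₗ[ℝ] (EuclideanSpace ℝ (Fin n))) := rfl
  rw [e1, e2, map_add, map_add, map_smul, map_smul, map_smul, map_smul]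
  have hcomm : LinearMap.trace ℝ (EuclideanSpace ℝ (Fin n)) ((dPhi g zs ∘L dTheta f zs : (EuclideanSpace ℝ (Fin n)) →L[ℝ] (EuclideanSpace ℝ (Fin n))) : (EuclideanSpace ℝ (Fin n)) →ₗ[ℝ] (EuclideanSpace ℝ (Fin n)))
      = LinearMap.trace ℝ (EuclideanSpace ℝ (Fin m)) ((dTheta f zs ∘L dPhi g zs : (EuclideanSpace ℝ (Fin m)) →L[ℝ] (EuclideanSpace ℝ (Fin m))) : (EuclideanSpace ℝ (Fin m)) →ₗ[ℝ] (EuclideanSpace ℝ (Fin m))) := by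
    rw [ContinuousLinearMap.toLinearMap_comp, ContinuousLinearMap.toLinearMap_comp, LinearMap.trace_comp_comm']
  rw [hcomm]
  have hlam' : lam * (1 - 2 * α / lam) = lam - 2 * α := by
    field_simp
  rw [hlam']
  simp only [smul_eq_mul]
  ring
end
end

section
/- Let l : ℝ → ℝ be twice continuously differentiable with l'(x) ≠ 0 for all x ∈ ℝ, and let h > 0. Consider the modified Dirac-GAN system given by discretization drift under simultaneous gradient descent with equal learning rates h: dφ/dt = l'(θφ)θ + (h/2)(−θ³ l'(θφ)l''(θφ) + φ l'(θφ)² + φ²θ l'(θφ)l''(θφ)), dθ/dt = −l'(θφ)φ − (h/2)(−θ l'(θφ)² − θ²φ l'(θφ)l''(θφ) + φ³ l'(θφ)l''(θφ)). Along any solution, d(θ² + φ²)/dt = h·l'(θφ)²·(θ² + φ²); in particular θ² + φ² is strictly increasing at every point (θ, φ) ≠ (0, 0). -/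
noncomputable section

/-- **Dirac-GAN: the modified continuous dynamics of simultaneous gradient descent increase
`θ² + φ²`.** Along any solution of the modified system,
`d(θ² + φ²)/dt = h·l'(θφ)²·(θ² + φ²)`, which is strictly positive away from `(0, 0)`. -/
theorem diracGAN_modified_dynamics_increase_norm
    (l : ℝ → ℝ) (hl : ContDiff ℝ 2 l)
    (hl' : ∀ x : ℝ, deriv l x ≠ 0)
    (h : ℝ) (hh : 0 < h)
    (φ θ : ℝ → ℝ)
    (hφ : ∀ t : ℝ, HasDerivAt φ
      (deriv l (θ t * φ t) * θ t +
        (h / 2) *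
          (-(θ t) ^ 3 * deriv l (θ t * φ t) * deriv (deriv l) (θ t * φ t) +
            φ t * (deriv l (θ t * φ t)) ^ 2 +
            (φ t) ^ 2 * θ t * deriv l (θ t * φ t) * deriv (deriv l) (θ t * φ t))) t)
    (hθ : ∀ t : ℝ, HasDerivAt θ
      (-(deriv l (θ t * φ t) * φ t) -
        (h / 2) *
          (-(θ t) * (deriv l (θ t * φ t)) ^ 2 -
            (θ t) ^ 2 * φ t * deriv l (θ t * φ t) * deriv (deriv l) (θ t * φ t) +
            (φ t) ^ 3 * deriv l (θ t * φ t) * deriv (deriv l) (θ t * φ t))) t) :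
    ∀ t : ℝ,
      HasDerivAt (fun s => θ s ^ 2 + φ s ^ 2)
        (h * (deriv l (θ t * φ t)) ^ 2 * (θ t ^ 2 + φ t ^ 2)) t ∧
      ((θ t, φ t) ≠ (0, 0) →
        0 < h * (deriv l (θ t * φ t)) ^ 2 * (θ t ^ 2 + φ t ^ 2)) := by
  intro t
  constructor
  · have h1 : HasDerivAt (fun s => θ s ^ 2 + φ s ^ 2) _ t := ((hθ t).pow 2).add ((hφ t).pow 2)
    convert h1 using 1
    ring
  · intro hne
    have hpos : 0 < θ t ^ 2 + φ t ^ 2 := by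
      by_contra hc
      push_neg at hc
      have h2 : θ t = 0 := by nlinarith [sq_nonneg (θ t), sq_nonneg (φ t)]
      have h3 : φ t = 0 := by nlinarith [sq_nonneg (θ t), sq_nonneg (φ t)]
      exact hne (by simp [h2, h3])
    have := hl' (θ t * φ t)
    positivity
end
end

section
/- Let l : ℝ → ℝ be twice continuously differentiable with l'(0) ≠ 0, and let h, α, λ > 0. The Jacobian at the equilibrium (θ, φ) = (0, 0) of the modified Dirac-GAN system for simultaneous gradient descent with learning rates αh and λh equals the 2×2 matrix [[hα l'(0)²/2, l'(0)], [−l'(0), hλ l'(0)²/2]]; its trace equals (h/2)(α + λ)l'(0)² > 0, and consequently this matrix has an eigenvalue with strictly positive real part, so the equilibrium of the modified system is unstable. -/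
noncomputable section

private lemma diracAux_mul_littleo {k s : ℝ × ℝ → ℝ} (hk : ContinuousAt k (0, 0))
    (hs : HasFDerivAt s (0 : ℝ × ℝ →L[ℝ] ℝ) (0, 0)) (hs0 : s (0, 0) = 0) :
    HasFDerivAt (fun z => k z * s z) (0 : ℝ × ℝ →L[ℝ] ℝ) (0, 0) := by
  have hs0' : s 0 = 0 := hs0
  have hs'' : s =o[nhds ((0:ℝ), (0:ℝ))] fun z => z - (0, 0) := by
    simpa [hs0', hs0] using hs.isLittleO
  have hbig : k =O[nhds ((0:ℝ), (0:ℝ))] (fun _ => (1 : ℝ)) :=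
    Filter.Tendsto.isBigO_one _ hk
  have hmain : (fun z => k z * s z) =o[nhds ((0:ℝ), (0:ℝ))] fun z => z - (0, 0) := by
    rw [← Asymptotics.isLittleO_norm_right]
    simpa using hbig.mul_isLittleO hs''.norm_right
  have hk0 : k 0 * s 0 = 0 := by rw [hs0', mul_zero]
  exact .of_isLittleO (by simpa [hk0, hs0] using hmain)

private lemma diracAux_eig (a b c : ℝ) (ha : 0 < a) (hb : 0 < b) (hc : c ≠ 0) :
    ∃ μ : ℂ, Module.End.HasEigenvalue
      (Matrix.toLin' (!![(a : ℂ), (c : ℂ); (-(c : ℂ)), (b : ℂ)])) μ ∧ 0 < μ.re := by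
  obtain ⟨w, hw⟩ := IsAlgClosed.exists_pow_nat_eq (((a : ℂ) - b) ^ 2 - 4 * c ^ 2) two_pos
  set s : ℂ := if 0 ≤ w.re then w else -w with hsdef
  have hs2 : s ^ 2 = ((a : ℂ) - b) ^ 2 - 4 * c ^ 2 := by
    rw [hsdef]; split <;> simp [hw, neg_pow]
  have hsre : 0 ≤ s.re := by
    rw [hsdef]; split
    · assumption
    · simp; linarith [lt_of_not_ge (by assumption : ¬ 0 ≤ w.re)]
  refine ⟨((a : ℂ) + b + s) / 2, ?_, ?_⟩
  · apply Module.End.hasEigenvalue_of_hasEigenvector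
      (x := ![(c : ℂ), ((a : ℂ) + b + s) / 2 - a])
    constructor
    · rw [Module.End.mem_eigenspace_iff, Matrix.toLin'_apply]
      funext i
      fin_cases i
      · simp [Matrix.mulVec, dotProduct, Fin.sum_univ_two]
        ring
      · simp [Matrix.mulVec, dotProduct, Fin.sum_univ_two]
        linear_combination (-1/4 : ℂ) * hs2
    · intro hv
      apply hc
      have := congrFun hv 0
      simpa using this
  · have : (((a : ℂ) + b + s) / 2).re = (a + b + s.re) / 2 := by
      simp [Complex.div_re, Complex.add_re, Complex.normSq]
    rw [this]
    positivity

set_option maxHeartbeats 2000000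

/-- **Dirac-GAN: instability of the modified system of simultaneous gradient descent.**
The Jacobian at the equilibrium `(0, 0)` of the modified Dirac-GAN vector field equals the
matrix `[[hα l'(0)²/2, l'(0)], [−l'(0), hλ l'(0)²/2]]`; its trace equals
`(h/2)(α + λ) l'(0)² > 0`, and consequently it has an eigenvalue with strictly positive real
part, so the equilibrium of the modified system is unstable. -/
theorem diracGAN_modified_jacobian_unstable
    (l : ℝ → ℝ) (hl : ContDiff ℝ 2 l) (hl0 : deriv l 0 ≠ 0)
    (h α lam : ℝ) (hh : 0 < h) (hα : 0 < α) (hlam : 0 < lam)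
    -- Dirac-GAN vector field: first coordinate is φ, second is θ
    (f g : ℝ × ℝ → ℝ)
    (hfdef : f = fun z => deriv l (z.2 * z.1) * z.2)
    (hgdef : g = fun z => -(deriv l (z.2 * z.1) * z.1))
    -- the modified vector field of simultaneous gradient descent
    (Ftilde : ℝ × ℝ → ℝ × ℝ)
    (hFtilde : Ftilde = fun z =>
      (f z - (α * h / 2) * fderiv ℝ f z (f z, g z),
       g z - (lam * h / 2) * fderiv ℝ g z (f z, g z)))
    (M : Matrix (Fin 2) (Fin 2) ℝ)
    (hM : M = !![h * α * (deriv l 0) ^ 2 / 2, deriv l 0;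
                 -(deriv l 0), h * lam * (deriv l 0) ^ 2 / 2]) :
    -- the modified Jacobian at the equilibrium acts as the matrix `M`
    (∀ u v : ℝ, fderiv ℝ Ftilde (0, 0) (u, v) =
      (h * α * (deriv l 0) ^ 2 / 2 * u + deriv l 0 * v,
       -(deriv l 0) * u + h * lam * (deriv l 0) ^ 2 / 2 * v)) ∧
    Matrix.trace M = (h / 2) * (α + lam) * (deriv l 0) ^ 2 ∧
    0 < Matrix.trace M ∧
    ∃ μ : ℂ, Module.End.HasEigenvalue
        (Matrix.toLin' (M.map (fun x : ℝ => (x : ℂ)))) μ ∧ 0 < μ.re := by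
  subst hfdef hgdef hFtilde hM
  have h2 : (2 : WithTop ℕ∞) = 1 + 1 := by norm_num
  have hD1 : ContDiff ℝ 1 (deriv l) := by
    rw [h2, contDiff_succ_iff_deriv] at hl
    exact hl.2.2
  have hDd : Differentiable ℝ (deriv l) := hD1.differentiable one_ne_zero
  have hD'c : Continuous (deriv (deriv l)) := hD1.continuous_deriv le_rfl
  -- pointwise fderiv formulas for f and g
  have hqd : ∀ z : ℝ × ℝ, HasFDerivAt (fun z : ℝ × ℝ => z.2 * z.1)
      (z.2 • ContinuousLinearMap.fst ℝ ℝ ℝ + z.1 • ContinuousLinearMap.snd ℝ ℝ ℝ) z :=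
    fun z => hasFDerivAt_snd.mul hasFDerivAt_fst
  have hDqd : ∀ z : ℝ × ℝ, HasFDerivAt (fun z : ℝ × ℝ => deriv l (z.2 * z.1))
      (deriv (deriv l) (z.2 * z.1) •
        (z.2 • ContinuousLinearMap.fst ℝ ℝ ℝ + z.1 • ContinuousLinearMap.snd ℝ ℝ ℝ)) z :=
    fun z => ((hDd (z.2 * z.1)).hasDerivAt.comp_hasFDerivAt z (hqd z) :)
  have hfval : ∀ z w : ℝ × ℝ, fderiv ℝ (fun z : ℝ × ℝ => deriv l (z.2 * z.1) * z.2) z w =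
      deriv (deriv l) (z.2 * z.1) * (z.2 * w.1 + z.1 * w.2) * z.2 + deriv l (z.2 * z.1) * w.2 := by
    intro z w
    have hf' := (hDqd z).fun_mul hasFDerivAt_snd
    rw [hf'.fderiv]
    simp
    ring
  have hgval : ∀ z w : ℝ × ℝ, fderiv ℝ (fun z : ℝ × ℝ => -(deriv l (z.2 * z.1) * z.1)) z w =
      -(deriv (deriv l) (z.2 * z.1) * (z.2 * w.1 + z.1 * w.2) * z.1 + deriv l (z.2 * z.1) * w.1) := by
    intro z w
    have hf' := ((hDqd z).fun_mul hasFDerivAt_fst).fun_neg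
    rw [hf'.fderiv]
    simp
    ring
  -- rewrite Ftilde as explicit function G
  have hFG : (fun z : ℝ × ℝ =>
      ((fun z : ℝ × ℝ => deriv l (z.2 * z.1) * z.2) z -
        (α * h / 2) * fderiv ℝ (fun z : ℝ × ℝ => deriv l (z.2 * z.1) * z.2) z
          ((fun z : ℝ × ℝ => deriv l (z.2 * z.1) * z.2) z,
           (fun z : ℝ × ℝ => -(deriv l (z.2 * z.1) * z.1)) z),
       (fun z : ℝ × ℝ => -(deriv l (z.2 * z.1) * z.1)) z -
        (lam * h / 2) * fderiv ℝ (fun z : ℝ × ℝ => -(deriv l (z.2 * z.1) * z.1)) z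
          ((fun z : ℝ × ℝ => deriv l (z.2 * z.1) * z.2) z,
           (fun z : ℝ × ℝ => -(deriv l (z.2 * z.1) * z.1)) z))) =
      (fun z : ℝ × ℝ =>
        ((deriv l (z.2 * z.1) * z.2 +
            (α * h / 2 * (deriv l (z.2 * z.1) * deriv l (z.2 * z.1))) * z.1) +
          (-(α * h / 2) * (deriv (deriv l) (z.2 * z.1) * deriv l (z.2 * z.1))) *
            ((z.2 * z.2 - z.1 * z.1) * z.2),
         (-(deriv l (z.2 * z.1) * z.1) +
            (lam * h / 2 * (deriv l (z.2 * z.1) * deriv l (z.2 * z.1))) * z.2) +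
          (lam * h / 2 * (deriv (deriv l) (z.2 * z.1) * deriv l (z.2 * z.1))) *
            ((z.2 * z.2 - z.1 * z.1) * z.1))) := by
    funext z
    rw [hfval, hgval]
    dsimp only
    refine Prod.ext ?_ ?_ <;> dsimp <;> ring
  -- derivative at the origin
  have hq0 : HasFDerivAt (fun z : ℝ × ℝ => z.2 * z.1) (0 : ℝ × ℝ →L[ℝ] ℝ) (0, 0) := by
    have := hqd (0, 0)
    exact this.congr_fderiv (by ext x <;> simp)
  have hDq0 : HasFDerivAt (fun z : ℝ × ℝ => deriv l (z.2 * z.1)) (0 : ℝ × ℝ →L[ℝ] ℝ) (0, 0) := by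
    have := hDqd (0, 0)
    exact this.congr_fderiv (by ext x <;> simp)
  have hm₁ : HasFDerivAt (fun z : ℝ × ℝ => deriv l (z.2 * z.1) * z.2 +
      (α * h / 2 * (deriv l (z.2 * z.1) * deriv l (z.2 * z.1))) * z.1) ((h * α * (deriv l 0) ^ 2 / 2) • ContinuousLinearMap.fst ℝ ℝ ℝ + (deriv l 0) • ContinuousLinearMap.snd ℝ ℝ ℝ) (0, 0) := by
    have := (hDq0.fun_mul hasFDerivAt_snd).fun_add
      ((((hDq0.fun_mul hDq0).const_mul (α * h / 2)).fun_mul hasFDerivAt_fst))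
    exact this.congr_fderiv (by ext x <;> simp <;> ring)
  have hm₂ : HasFDerivAt (fun z : ℝ × ℝ => -(deriv l (z.2 * z.1) * z.1) +
      (lam * h / 2 * (deriv l (z.2 * z.1) * deriv l (z.2 * z.1))) * z.2) ((-(deriv l 0)) • ContinuousLinearMap.fst ℝ ℝ ℝ + (h * lam * (deriv l 0) ^ 2 / 2) • ContinuousLinearMap.snd ℝ ℝ ℝ) (0, 0) := by
    have := ((hDq0.fun_mul hasFDerivAt_fst).fun_neg).fun_add
      ((((hDq0.fun_mul hDq0).const_mul (lam * h / 2)).fun_mul hasFDerivAt_snd))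
    exact this.congr_fderiv (by ext x <;> simp <;> ring)
  have hs : HasFDerivAt (fun z : ℝ × ℝ => (z.2 * z.2 - z.1 * z.1) * z.2)
      (0 : ℝ × ℝ →L[ℝ] ℝ) (0, 0) := by
    have := ((hasFDerivAt_snd.mul hasFDerivAt_snd).sub
      ((hasFDerivAt_fst (𝕜 := ℝ) (p := ((0 : ℝ), (0 : ℝ)))).mul hasFDerivAt_fst)).mul
      hasFDerivAt_snd
    exact this.congr_fderiv (by ext x <;> simp)
  have hkcont : Continuous (fun z : ℝ × ℝ => deriv (deriv l) (z.2 * z.1) * deriv l (z.2 * z.1)) :=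
    (hD'c.comp (continuous_snd.mul continuous_fst)).mul
      (hDd.continuous.comp (continuous_snd.mul continuous_fst))
  have hr₁ : HasFDerivAt (fun z : ℝ × ℝ =>
      (-(α * h / 2) * (deriv (deriv l) (z.2 * z.1) * deriv l (z.2 * z.1))) *
        ((z.2 * z.2 - z.1 * z.1) * z.2)) (0 : ℝ × ℝ →L[ℝ] ℝ) (0, 0) :=
    diracAux_mul_littleo ((continuous_const.mul hkcont).continuousAt) hs (by norm_num)
  have hr₂ : HasFDerivAt (fun z : ℝ × ℝ =>
      (lam * h / 2 * (deriv (deriv l) (z.2 * z.1) * deriv l (z.2 * z.1))) *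
        ((z.2 * z.2 - z.1 * z.1) * z.1)) (0 : ℝ × ℝ →L[ℝ] ℝ) (0, 0) := by
    have hs' : HasFDerivAt (fun z : ℝ × ℝ => (z.2 * z.2 - z.1 * z.1) * z.1)
        (0 : ℝ × ℝ →L[ℝ] ℝ) (0, 0) := by
      have := ((hasFDerivAt_snd.fun_mul hasFDerivAt_snd).fun_sub
        ((hasFDerivAt_fst (𝕜 := ℝ) (p := ((0 : ℝ), (0 : ℝ)))).fun_mul hasFDerivAt_fst)).fun_mul
        hasFDerivAt_fst
      refine this.congr_fderiv ?_
      ext x <;> simp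
    exact diracAux_mul_littleo ((continuous_const.mul hkcont).continuousAt) hs' (by norm_num)
  have hG1 : HasFDerivAt (fun z : ℝ × ℝ =>
      (deriv l (z.2 * z.1) * z.2 +
        (α * h / 2 * (deriv l (z.2 * z.1) * deriv l (z.2 * z.1))) * z.1) +
      (-(α * h / 2) * (deriv (deriv l) (z.2 * z.1) * deriv l (z.2 * z.1))) *
        ((z.2 * z.2 - z.1 * z.1) * z.2)) ((h * α * (deriv l 0) ^ 2 / 2) • ContinuousLinearMap.fst ℝ ℝ ℝ + (deriv l 0) • ContinuousLinearMap.snd ℝ ℝ ℝ) (0, 0) := by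
    simpa using hm₁.fun_add hr₁
  have hG2 : HasFDerivAt (fun z : ℝ × ℝ =>
      (-(deriv l (z.2 * z.1) * z.1) +
        (lam * h / 2 * (deriv l (z.2 * z.1) * deriv l (z.2 * z.1))) * z.2) +
      (lam * h / 2 * (deriv (deriv l) (z.2 * z.1) * deriv l (z.2 * z.1))) *
        ((z.2 * z.2 - z.1 * z.1) * z.1)) ((-(deriv l 0)) • ContinuousLinearMap.fst ℝ ℝ ℝ + (h * lam * (deriv l 0) ^ 2 / 2) • ContinuousLinearMap.snd ℝ ℝ ℝ) (0, 0) := by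
    simpa using hm₂.fun_add hr₂
  have hGd := hG1.prodMk hG2
  refine ⟨?_, ?_, ?_, ?_⟩
  · intro u v
    rw [hFG, hGd.fderiv]
    simp [ContinuousLinearMap.prod_apply]
  · rw [Matrix.trace_fin_two_of]; ring
  · rw [Matrix.trace_fin_two_of]
    have hc2 : 0 < (deriv l 0) ^ 2 := by positivity
    positivity
  · have hc2 : 0 < (deriv l 0) ^ 2 := by positivity
    have ha' : 0 < h * α * (deriv l 0) ^ 2 / 2 := by positivity
    have hb' : 0 < h * lam * (deriv l 0) ^ 2 / 2 := by positivity
    obtain ⟨μ, hμ, hre⟩ := diracAux_eig _ _ _ ha' hb' hl0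
    refine ⟨μ, ?_, hre⟩
    have hmap : (!![h * α * (deriv l 0) ^ 2 / 2, deriv l 0; -(deriv l 0), h * lam * (deriv l 0) ^ 2 / 2]).map
        (fun x : ℝ => (x : ℂ)) =
        !![((h * α * (deriv l 0) ^ 2 / 2 : ℝ) : ℂ), ((deriv l 0 : ℝ) : ℂ);
           (-((deriv l 0 : ℝ) : ℂ)), ((h * lam * (deriv l 0) ^ 2 / 2 : ℝ) : ℂ)] := by
      ext i j
      fin_cases i <;> fin_cases j <;> simp [Matrix.map_apply] <;> push_cast <;> ring
    rw [hmap]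
    exact hμ
end
end

section
/- Let L₁, L₂ : ℝ^m × ℝ^n → ℝ be twice continuously differentiable and set f = −∇_φ L₁, g = −∇_θ L₂ (general two-player gradient descent). Then the first-order drift correction of simultaneous gradient descent for the first player satisfies f₁ = −(1/2)(f·∇_φ f + g·∇_θ f) = −(1/4)∇_φ‖∇_φ L₁‖² − (1/2)(∇_θ L₂)·∇_θ(∇_φ L₁), and for the second player g₁ = −(1/2)(f·∇_φ g + g·∇_θ g) = −(1/4)∇_θ‖∇_θ L₂‖² − (1/2)(∇_φ L₁)·∇_φ(∇_θ L₂), where (∇_θ L₂)·∇_θ(∇_φ L₁) denotes the row vector with j-th entry Σ_i (∂L₂/∂θ_i)(∂²L₁/∂θ_i∂φ_j), and analogously for the other mixed term. -/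
noncomputable section

open scoped RealInnerProductSpace

section Aux

variable {M N : Type*} [NormedAddCommGroup M] [InnerProductSpace ℝ M] [CompleteSpace M]
  [NormedAddCommGroup N] [NormedSpace ℝ N]

/-- Gradient with respect to the first factor (auxiliary). -/
def gradFst (E : M × N → ℝ) (z : M × N) : M :=
  gradient (fun φ => E (φ, z.2)) z.1

/-- The continuous linear map sending a functional on `M × N` to the vector representing its
restriction to the first factor. -/
def reprFst : ((M × N) →L[ℝ] ℝ) →L[ℝ] M :=
  ((InnerProductSpace.toDual ℝ M).symm.toContinuousLinearEquiv.toContinuousLinearMap).comp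
    ((ContinuousLinearMap.compL ℝ M (M × N) ℝ).flip (ContinuousLinearMap.inl ℝ M N))

lemma inner_reprFst (L' : (M × N) →L[ℝ] ℝ) (u : M) : ⟪reprFst L', u⟫ = L' (u, 0) := by
  have : reprFst L' = (InnerProductSpace.toDual ℝ M).symm
      (L'.comp (ContinuousLinearMap.inl ℝ M N)) := rfl
  rw [this, InnerProductSpace.toDual_symm_apply]
  rfl

lemma gradFst_rep (L : M × N → ℝ) (hL : Differentiable ℝ L) :
    gradFst L = fun z => reprFst (fderiv ℝ L z) := by
  funext z
  have h : HasFDerivAt (fun φ => L (φ, z.2))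
      ((fderiv ℝ L z).comp (ContinuousLinearMap.inl ℝ M N)) z.1 := by
    have := (hL (z.1, z.2)).hasFDerivAt.comp z.1 (hasFDerivAt_prodMk_left (𝕜 := ℝ) z.1 z.2)
    exact this
  show (InnerProductSpace.toDual ℝ M).symm (fderiv ℝ (fun φ => L (φ, z.2)) z.1) = _
  rw [h.fderiv]
  rfl

lemma gradFst_contDiff {L : M × N → ℝ} (hL : ContDiff ℝ 2 L) : ContDiff ℝ 1 (gradFst L) := by
  rw [gradFst_rep L (hL.differentiable (by norm_num))]
  exact reprFst.contDiff.comp (hL.fderiv_right (m := 1) (by norm_num))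

lemma fderiv_gradFst {L : M × N → ℝ} (hL : ContDiff ℝ 2 L) (z : M × N) :
    fderiv ℝ (gradFst L) z = reprFst.comp (fderiv ℝ (fderiv ℝ L) z) := by
  rw [gradFst_rep L (hL.differentiable (by norm_num))]
  exact (reprFst.hasFDerivAt.comp z
    (((hL.fderiv_right (m := 1) (by norm_num)).differentiable one_ne_zero z).hasFDerivAt)).fderiv

lemma aux_drift (L : M × N → ℝ) (hL : ContDiff ℝ 2 L) (z : M × N) (v : N) :
    (-(1 / 2 : ℝ)) • (fderiv ℝ (fun w => -gradFst L w) z (-gradFst L z, 0)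
        + fderiv ℝ (fun w => -gradFst L w) z (0, -v)) =
      (-(1 / 4 : ℝ)) • gradFst (fun w => ‖gradFst L w‖ ^ 2) z
        - (1 / 2 : ℝ) • fderiv ℝ (fun w => gradFst L w) z (0, v) := by
  have hG1 : ContDiff ℝ 1 (gradFst L) := gradFst_contDiff hL
  have hGd : Differentiable ℝ (gradFst L) := hG1.differentiable one_ne_zero
  have hsym : IsSymmSndFDerivAt ℝ L z :=
    (hL.contDiffAt).isSymmSndFDerivAt (by norm_num)
  have key1 : ∀ (w : M × N) (u : M),
      ⟪fderiv ℝ (gradFst L) z w, u⟫ = fderiv ℝ (fderiv ℝ L) z w (u, 0) := by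
    intro w u
    rw [fderiv_gradFst hL, ContinuousLinearMap.coe_comp', Function.comp_apply, inner_reprFst]
  have hsq : gradFst (fun w => ‖gradFst L w‖ ^ 2) z
      = (2 : ℝ) • fderiv ℝ (gradFst L) z (gradFst L z, 0) := by
    have hfun : (fun w => ‖gradFst L w‖ ^ 2) = fun w => ⟪gradFst L w, gradFst L w⟫ := by
      funext w; rw [real_inner_self_eq_norm_sq]
    have hdiff2 : Differentiable ℝ (fun w => ‖gradFst L w‖ ^ 2) := by
      rw [hfun]; exact hGd.inner ℝ hGd
    apply ext_inner_right ℝ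
    intro u
    have h1 : ⟪gradFst (fun w => ‖gradFst L w‖ ^ 2) z, u⟫
        = fderiv ℝ (fun w => ‖gradFst L w‖ ^ 2) z (u, 0) := by
      rw [gradFst_rep _ hdiff2, inner_reprFst]
    have h2 : ⟪gradFst L z, (fderiv ℝ (gradFst L) z) (u, 0)⟫
        = ⟪(fderiv ℝ (gradFst L) z) (gradFst L z, 0), u⟫ := by
      rw [real_inner_comm, key1, hsym, ← key1]
    have h3 : ⟪(fderiv ℝ (gradFst L) z) (u, 0), gradFst L z⟫
        = ⟪(fderiv ℝ (gradFst L) z) (gradFst L z, 0), u⟫ := by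
      rw [key1, hsym, ← key1]
    rw [h1, hfun, fderiv_inner_apply ℝ (hGd z) (hGd z), h2, h3, real_inner_smul_left]
    ring
  have hneg : fderiv ℝ (fun w => -gradFst L w) z = -fderiv ℝ (gradFst L) z := fderiv_neg
  have e1 : ((-gradFst L z, (0 : N)) : M × N) = -((gradFst L z, 0) : M × N) := by
    simp
  have e2 : (((0 : M), -v) : M × N) = -(((0 : M), v) : M × N) := by simp
  rw [hneg, hsq, e1, e2]
  simp only [ContinuousLinearMap.neg_apply, map_neg]
  module

end Aux

/-- **Drift corrections in general two-player games.**
For gradient descent with `f = −∇_φ L₁` and `g = −∇_θ L₂`, the first-order drift corrections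
of simultaneous gradient descent satisfy
`f₁ = −(1/4)∇_φ‖∇_φ L₁‖² − (1/2)(∇_θ L₂)·∇_θ(∇_φ L₁)` and
`g₁ = −(1/4)∇_θ‖∇_θ L₂‖² − (1/2)(∇_φ L₁)·∇_φ(∇_θ L₂)`. -/
theorem general_game_drift_corrections {m n : ℕ}
    (L₁ L₂ : EuclideanSpace ℝ (Fin m) × EuclideanSpace ℝ (Fin n) → ℝ)
    (hL₁ : ContDiff ℝ 2 L₁) (hL₂ : ContDiff ℝ 2 L₂)
    (f : EuclideanSpace ℝ (Fin m) × EuclideanSpace ℝ (Fin n) → EuclideanSpace ℝ (Fin m))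
    (g : EuclideanSpace ℝ (Fin m) × EuclideanSpace ℝ (Fin n) → EuclideanSpace ℝ (Fin n))
    (hfdef : f = fun z => -gradPhi L₁ z) (hgdef : g = fun z => -gradTheta L₂ z) :
    ∀ z : EuclideanSpace ℝ (Fin m) × EuclideanSpace ℝ (Fin n),
      (-(1 / 2 : ℝ)) • (fderiv ℝ f z (f z, 0) + fderiv ℝ f z (0, g z)) =
        (-(1 / 4 : ℝ)) • gradPhi (fun w => ‖gradPhi L₁ w‖ ^ 2) z -
          (1 / 2 : ℝ) • fderiv ℝ (fun w => gradPhi L₁ w) z (0, gradTheta L₂ z) ∧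
      (-(1 / 2 : ℝ)) • (fderiv ℝ g z (f z, 0) + fderiv ℝ g z (0, g z)) =
        (-(1 / 4 : ℝ)) • gradTheta (fun w => ‖gradTheta L₂ w‖ ^ 2) z -
          (1 / 2 : ℝ) • fderiv ℝ (fun w => gradTheta L₂ w) z (gradPhi L₁ z, 0) := by
  subst hfdef hgdef
  intro z
  constructor
  · exact aux_drift L₁ hL₁ z (gradTheta L₂ z)
  · set L' : EuclideanSpace ℝ (Fin n) × EuclideanSpace ℝ (Fin m) → ℝ := fun p => L₂ (p.2, p.1) with hL'def
    have hL' : ContDiff ℝ 2 L' := hL₂.comp (contDiff_snd.prodMk contDiff_fst)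
    have hdiffG' : Differentiable ℝ (gradFst L') :=
      (gradFst_contDiff hL').differentiable one_ne_zero
    set Sc : (EuclideanSpace ℝ (Fin m) × EuclideanSpace ℝ (Fin n)) →L[ℝ]
        (EuclideanSpace ℝ (Fin n) × EuclideanSpace ℝ (Fin m)) :=
      (ContinuousLinearMap.snd ℝ _ _).prod (ContinuousLinearMap.fst ℝ _ _) with hScdef
    have hSc : HasFDerivAt (fun w : EuclideanSpace ℝ (Fin m) × EuclideanSpace ℝ (Fin n) =>
        ((w.2, w.1) : EuclideanSpace ℝ (Fin n) × EuclideanSpace ℝ (Fin m))) Sc z := Sc.hasFDerivAt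
    have hc1 : fderiv ℝ (fun w : EuclideanSpace ℝ (Fin m) × EuclideanSpace ℝ (Fin n) => gradFst L' (w.2, w.1)) z
        = (fderiv ℝ (gradFst L') (z.2, z.1)).comp Sc :=
      by have := ((hdiffG' (z.2, z.1)).hasFDerivAt.comp z hSc).fderiv; exact this
    have hc2 : fderiv ℝ (fun w : EuclideanSpace ℝ (Fin m) × EuclideanSpace ℝ (Fin n) => -gradFst L' (w.2, w.1)) z
        = (fderiv ℝ (fun p => -gradFst L' p) (z.2, z.1)).comp Sc :=
      by have := ((hdiffG'.neg (z.2, z.1)).hasFDerivAt.comp z hSc).fderiv; exact this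
    show (-(1 / 2 : ℝ)) • (fderiv ℝ (fun w : EuclideanSpace ℝ (Fin m) × EuclideanSpace ℝ (Fin n) => -gradFst L' (w.2, w.1)) z (-gradPhi L₁ z, 0)
          + fderiv ℝ (fun w : EuclideanSpace ℝ (Fin m) × EuclideanSpace ℝ (Fin n) => -gradFst L' (w.2, w.1)) z (0, -gradTheta L₂ z)) =
        (-(1 / 4 : ℝ)) • gradFst (fun p => ‖gradFst L' p‖ ^ 2) (z.2, z.1)
          - (1 / 2 : ℝ) • fderiv ℝ (fun w : EuclideanSpace ℝ (Fin m) × EuclideanSpace ℝ (Fin n) => gradFst L' (w.2, w.1)) z (gradPhi L₁ z, 0)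
    rw [hc1, hc2]
    simp only [ContinuousLinearMap.coe_comp', Function.comp_apply, hScdef,
      ContinuousLinearMap.prod_apply, ContinuousLinearMap.coe_snd', ContinuousLinearMap.coe_fst']
    rw [add_comm]
    exact aux_drift L' hL' (z.2, z.1) (gradPhi L₁ z)
end
end
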